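/- The directional derivative of the matrix exponential satisfies the integral formula: for p×p real matrices A and B, d/dε exp(A + εB)|_{ε=0} = ∫₀¹ exp((1−u)A) · B · exp(uA) du. -/

import Mathlib

attribute [local instance] Matrix.linftyOpNormedAddCommGroup Matrix.linftyOpNormedSpace

open NormedSpace

section DerivExpAux

variable {𝔸 : Type*} [NormedRing 𝔸] [NormedAlgebra ℝ 𝔸] [CompleteSpace 𝔸]

private lemma hasDerivAt_exp_one_sub_aux (A : 𝔸) (u : ℝ) :
    HasDerivAt (fun u : ℝ => exp ((1 - u) • A)) (-(A * exp ((1 - u) • A))) u := by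
  have h1 : HasDerivAt (fun s : ℝ => exp (s • A)) (A * exp ((1 - u) • A)) (1 - u) :=
    hasDerivAt_exp_smul_const' A (1 - u)
  have h2 : HasDerivAt (fun u : ℝ => 1 - u) (-1) u := by
    simpa using (hasDerivAt_id u).const_sub 1
  simpa [Function.comp_def] using h1.scomp u h2

private lemma ftc_identity_exp_aux (A B : 𝔸) (ε : ℝ) :
    exp (A + ε • B) - exp A
      = ε • ∫ u in (0:ℝ)..1, exp ((1 - u) • A) * B * exp (u • (A + ε • B)) := by
  set N := A + ε • B with hN
  have hderiv : ∀ u ∈ Set.uIcc (0:ℝ) 1,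
      HasDerivAt (fun u : ℝ => exp ((1 - u) • A) * exp (u • N))
        (ε • (exp ((1 - u) • A) * B * exp (u • N))) u := by
    intro u _
    have h1 := hasDerivAt_exp_one_sub_aux A u
    have h2 : HasDerivAt (fun u : ℝ => exp (u • N)) (N * exp (u • N)) u :=
      hasDerivAt_exp_smul_const' N u
    convert h1.mul h2 using 1
    · rfl
    have hcomm : A * exp ((1 - u) • A) = exp ((1 - u) • A) * A :=
      (((Commute.refl A).smul_right ((1:ℝ) - u)).exp_right).eq
    rw [hcomm, hN]
    simp only [add_mul, smul_mul_assoc, mul_add, mul_smul_comm, neg_mul, mul_assoc]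
    abel
  have hcont : Continuous
      (fun u : ℝ => ε • (exp ((1 - u) • A) * B * exp (u • N))) := by
    refine Continuous.const_smul ?_ ε
    letI : NormedAlgebra ℚ 𝔸 := .restrictScalars ℚ ℝ 𝔸
    exact ((exp_continuous.comp (by fun_prop)).mul continuous_const).mul
      (exp_continuous.comp (by fun_prop))
  have key := intervalIntegral.integral_eq_sub_of_hasDerivAt hderiv
    (hcont.intervalIntegrable 0 1)
  simp only [one_smul, zero_smul, exp_zero, sub_zero, sub_self, one_mul, mul_one] at key
  rw [← key, intervalIntegral.integral_smul]

private lemma hasDerivAt_exp_general_aux (A B : 𝔸) :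
    HasDerivAt (fun ε : ℝ => exp (A + ε • B))
      (∫ u in (0:ℝ)..1, exp ((1 - u) • A) * B * exp (u • A)) 0 := by
  set h : ℝ → 𝔸 := fun ε => ∫ u in (0:ℝ)..1,
      exp ((1 - u) • A) * B * exp (u • (A + ε • B)) with hh
  have hcont : Continuous h := by
    apply intervalIntegral.continuous_parametric_intervalIntegral_of_continuous'
    show Continuous fun p : ℝ × ℝ =>
      exp ((1 - p.2) • A) * B * exp (p.2 • (A + p.1 • B))
    letI : NormedAlgebra ℚ 𝔸 := .restrictScalars ℚ ℝ 𝔸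
    exact ((exp_continuous.comp (by fun_prop)).mul continuous_const).mul
      (exp_continuous.comp (by fun_prop))
  rw [hasDerivAt_iff_tendsto_slope]
  have heq : ∀ ε ∈ ({(0:ℝ)}ᶜ : Set ℝ), h ε = slope (fun ε : ℝ => exp (A + ε • B)) 0 ε := by
    intro ε hε
    have hε' : ε ≠ 0 := hε
    rw [slope_def_module]
    simp only [zero_smul, add_zero, sub_zero]
    rw [ftc_identity_exp_aux A B ε, smul_smul, inv_mul_cancel₀ hε', one_smul]
  have h0 : h 0 = ∫ u in (0:ℝ)..1, exp ((1 - u) • A) * B * exp (u • A) := by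
    simp [hh]
  refine Filter.Tendsto.congr' ?_ (h0 ▸ (hcont.tendsto 0).mono_left nhdsWithin_le_nhds)
  exact Filter.eventuallyEq_of_mem self_mem_nhdsWithin heq

end DerivExpAux

/-- Directional derivative of the matrix exponential:
`d/dε exp(A + εB)|_{ε=0} = ∫₀¹ exp((1−u)A) · B · exp(uA) du`. -/
theorem deriv_matrix_exp {p : ℕ} (A B : Matrix (Fin p) (Fin p) ℝ) :
    HasDerivAt (fun ε : ℝ => exp (A + ε • B))
      (∫ u in (0:ℝ)..1, exp ((1 - u) • A) * B * exp (u • A)) 0 := by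
  letI : NormedRing (Matrix (Fin p) (Fin p) ℝ) := Matrix.linftyOpNormedRing
  letI : NormedAlgebra ℝ (Matrix (Fin p) (Fin p) ℝ) := Matrix.linftyOpNormedAlgebra
  exact hasDerivAt_exp_general_aux A B
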